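/- For all integers M ≥ 1, j ≥ 1, and K with K ≥ (j+1)(M+1), the following identity of rational numbers holds: [C(j(M+1)−1, M) · C(K−M−1, j(M+1))] / [C(K−M−1, (j−1)(M+1)) · C(K−1−j(M+1), M)] = (K − j(M+1)) / (j(M+1)), where C(n, m) denotes the binomial coefficient. -/

import Mathlib

/-- the single-factor binomial-coefficient identity
    `[C(j(M+1)−1, M) · C(K−M−1, j(M+1))] / [C(K−M−1, (j−1)(M+1)) · C(K−1−j(M+1), M)]
      = (K − j(M+1)) / (j(M+1))`. -/
theorem choose_ratio_eq (M j K : ℕ) (hM : 1 ≤ M) (hj : 1 ≤ j)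
    (hK : (j + 1) * (M + 1) ≤ K) :
    ((Nat.choose (j * (M + 1) - 1) M : ℚ) * (Nat.choose (K - M - 1) (j * (M + 1)) : ℚ)) /
        ((Nat.choose (K - M - 1) ((j - 1) * (M + 1)) : ℚ) *
          (Nat.choose (K - 1 - j * (M + 1)) M : ℚ))
      = ((K : ℚ) - (j : ℚ) * ((M : ℚ) + 1)) / ((j : ℚ) * ((M : ℚ) + 1)) := by
  obtain ⟨i, rfl⟩ := Nat.exists_eq_add_of_le hj
  obtain ⟨t, rfl⟩ := Nat.exists_eq_add_of_le hK
  set P := i * (M + 1) with hP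
  have hmul : (1 + i) * (M + 1) = P + (M + 1) := by rw [hP]; ring
  have hmul2 : (1 + i + 1) * (M + 1) = P + 2 * (M + 1) := by rw [hP]; ring
  have hj1 : (1 + i - 1) = i := by omega
  rw [hmul, hmul2, hj1]
  have e1 : P + (M + 1) - 1 = P + M := by omega
  have e2 : P + 2 * (M + 1) + t - M - 1 = P + M + 1 + t := by omega
  have e3 : P + 2 * (M + 1) + t - 1 - (P + (M + 1)) = M + t := by omega
  rw [e1, e2, e3]
  have h1 : M ≤ P + M := by omega
  have h2 : P + (M + 1) ≤ P + M + 1 + t := by omega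
  have h3 : P ≤ P + M + 1 + t := by omega
  have h4 : M ≤ M + t := by omega
  rw [Nat.cast_choose ℚ h1, Nat.cast_choose ℚ h2, Nat.cast_choose ℚ h3,
    Nat.cast_choose ℚ h4]
  have s1 : P + M - M = P := by omega
  have s2 : P + M + 1 + t - (P + (M + 1)) = t := by omega
  have s3 : P + M + 1 + t - P = M + 1 + t := by omega
  have s4 : M + t - M = t := by omega
  rw [s1, s2, s3, s4]
  have f1 : (P + (M + 1)).factorial = (P + M + 1) * (P + M).factorial := by
    rw [show P + (M + 1) = (P + M) + 1 by ring, Nat.factorial_succ]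
  have f2 : (M + 1 + t).factorial = (M + 1 + t) * (M + t).factorial := by
    rw [show M + 1 + t = (M + t) + 1 by ring, Nat.factorial_succ]
  rw [f1, f2]
  have hRHS : ((P + 2 * (M + 1) + t : ℕ) : ℚ) - ((1 + i : ℕ) : ℚ) * ((M : ℚ) + 1)
      = (M : ℚ) + 1 + t := by
    push_cast [hP]; ring
  rw [hRHS]
  have hden : ((1 + i : ℕ) : ℚ) * ((M : ℚ) + 1) = ((P : ℚ) + M + 1) := by
    push_cast [hP]; ring
  rw [hden]
  have n1 : (M.factorial : ℚ) ≠ 0 := by positivity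
  have n2 : (P.factorial : ℚ) ≠ 0 := by positivity
  have n3 : (t.factorial : ℚ) ≠ 0 := by positivity
  have n4 : ((M + t).factorial : ℚ) ≠ 0 := by positivity
  have n5 : ((P + M).factorial : ℚ) ≠ 0 := by positivity
  have n6 : ((P + M + 1 + t).factorial : ℚ) ≠ 0 := by positivity
  have n7 : ((P : ℚ) + M + 1) ≠ 0 := by positivity
  field_simp
  push_cast
  ring
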